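/- Let λ > 0 and α > 0 be fixed. For each N, let μ_N be the positive function on H_N satisfying the balance equations of the regenerative contact process, normalized so that μ_N(1,N) = 1, write v_n = μ_N(1,n), and set m = ⌊λN/(1+λ)⌋. Then v_m / ( ((1+λ)/√(2πλN)) · ((1+λ)/λ)^{N + 2/(1+2λ)} ) → 1 as N → ∞. -/

import Mathlib

open Finset

/-- State space of the contact process on the star with `N` leaves:
`{0,1} × {0,1,…,N}`. -/
def starStates (N : ℕ) : Finset (ℕ × ℕ) := ({0, 1} : Finset ℕ) ×ˢ Finset.range (N + 1)

/-- Jump rates of the contact process on the star with `N` leaves and infection rate `lam`. -/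
noncomputable def starRate (lam : ℝ) (N : ℕ) (x y : ℕ × ℕ) : ℝ :=
  if x.1 = 1 ∧ y.1 = 1 ∧ y.2 = x.2 + 1 ∧ x.2 + 1 ≤ N then lam * ((N : ℝ) - x.2)
  else if x.1 = 1 ∧ y.1 = 1 ∧ x.2 = y.2 + 1 ∧ x.2 ≤ N then (x.2 : ℝ)
  else if x.1 = 0 ∧ y.1 = 0 ∧ x.2 = y.2 + 1 ∧ x.2 ≤ N then (x.2 : ℝ)
  else if x.1 = 1 ∧ y.1 = 0 ∧ y.2 = x.2 ∧ x.2 ≤ N then 1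
  else if x.1 = 0 ∧ y.1 = 1 ∧ y.2 = x.2 ∧ 1 ≤ x.2 ∧ x.2 ≤ N then lam * (x.2 : ℝ)
  else 0

/-- Jump rates of the regenerative contact process: the contact process rates plus the
supplementary rate `alpha` from `(0,0)` to `(1,0)`. -/
noncomputable def regenRate (lam alpha : ℝ) (N : ℕ) (x y : ℕ × ℕ) : ℝ :=
  if x = (0, 0) ∧ y = (1, 0) then alpha else starRate lam N x y

/-- `μ` satisfies the balance (stationarity) equations of the regenerative process. -/
def IsBalanced (lam alpha : ℝ) (N : ℕ) (μ : ℕ × ℕ → ℝ) : Prop :=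
  ∀ x ∈ starStates N,
    ∑ y ∈ starStates N, μ y * regenRate lam alpha N y x =
      μ x * ∑ y ∈ starStates N, regenRate lam alpha N x y

open Filter Topology

section Extract

variable {lam alpha : ℝ} {N : ℕ} {μ : ℕ × ℕ → ℝ}

lemma mem_starStates {x : ℕ × ℕ} : x ∈ starStates N ↔ (x.1 = 0 ∨ x.1 = 1) ∧ x.2 ≤ N := by
  cases x with
  | mk a b => simp [starStates, Nat.lt_succ_iff]

lemma sum_starStates (f : ℕ × ℕ → ℝ) :
    ∑ y ∈ starStates N, f y =
      ∑ j ∈ Finset.range (N+1), f (0, j) + ∑ j ∈ Finset.range (N+1), f (1, j) := by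
  rw [starStates, Finset.sum_product,
    show ({0,1} : Finset ℕ) = insert 0 {1} from rfl,
    Finset.sum_insert (by decide), Finset.sum_singleton]

lemma sum_two_ite {s : Finset ℕ} {a b : ℕ} (A B : ℝ) (hab : a ≠ b) (ha : a ∈ s) (hb : b ∈ s) :
    ∑ j ∈ s, (if j = a then A else if j = b then B else 0) = A + B := by
  have h : ∀ j ∈ s, (if j = a then A else if j = b then B else 0)
      = (if j = a then A else 0) + (if j = b then B else 0) := by
    intro j _
    by_cases h1 : j = a
    · subst h1
      have : j ≠ b := hab
      simp [this]
    · by_cases h2 : j = b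
      · subst h2
        simp [Ne.symm hab, h1]
      · simp [h1, h2]
  rw [Finset.sum_congr rfl h, Finset.sum_add_distrib,
    Finset.sum_ite_eq' s a (fun _ => A), Finset.sum_ite_eq' s b (fun _ => B),
    if_pos ha, if_pos hb]

lemma sum_one_ite {s : Finset ℕ} {a : ℕ} (A : ℝ) (ha : a ∈ s) :
    ∑ j ∈ s, (if j = a then A else 0) = A := by
  rw [Finset.sum_ite_eq' s a (fun _ => A), if_pos ha]

end Extract
section Rows

variable {lam alpha : ℝ} {N : ℕ} (μ : ℕ × ℕ → ℝ)

lemma row11a {i : ℕ} (hi : i + 2 ≤ N) :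
    ∑ j ∈ Finset.range (N+1), μ (1, j) * regenRate lam alpha N (1, j) (1, i+1)
      = μ (1, i) * (lam * ((N:ℝ) - (i:ℝ))) + μ (1, i+2) * ((i:ℝ) + 2) := by
  rw [Finset.sum_congr rfl (g := fun j => if j = i then μ (1, i) * (lam * ((N:ℝ) - (i:ℝ)))
      else if j = i+2 then μ (1, i+2) * ((i:ℝ) + 2) else 0) ?_,
    sum_two_ite _ _ (by omega) (by simp; omega) (by simp; omega)]
  intro j hj
  simp only [Finset.mem_range, Nat.lt_succ_iff] at hj
  by_cases h1 : j = i
  · subst h1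
    rw [if_pos rfl]
    have hr : regenRate lam alpha N (1, j) (1, j+1) = lam * ((N:ℝ) - (j:ℝ)) := by
      simp [regenRate, starRate, show j + 1 ≤ N by omega]
    rw [hr]
  · by_cases h2 : j = i + 2
    · subst h2
      rw [if_neg h1, if_pos rfl]
      have hr : regenRate lam alpha N (1, i+2) (1, i+1) = ((i:ℝ) + 2) := by
        have : ¬ (i + 1 = i + 2 + 1) := by omega
        simp [regenRate, starRate, this, show i + 2 ≤ N by omega]
        all_goals (push_cast; ring)
      rw [hr]
    · rw [if_neg h1, if_neg h2]
      have hr : regenRate lam alpha N (1, j) (1, i+1) = 0 := by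
        have h3 : ¬ (i + 1 = j + 1) := by omega
        simp [regenRate, starRate, h3, h2]
        exact fun h => absurd h.symm h1
      rw [hr, mul_zero]

lemma row11b {i : ℕ} (hi : i + 1 = N) :
    ∑ j ∈ Finset.range (N+1), μ (1, j) * regenRate lam alpha N (1, j) (1, i+1)
      = μ (1, i) * (lam * ((N:ℝ) - (i:ℝ))) := by
  rw [Finset.sum_congr rfl (g := fun j => if j = i then μ (1, i) * (lam * ((N:ℝ) - (i:ℝ)))
      else 0) ?_, sum_one_ite _ (by simp; omega)]
  intro j hj
  simp only [Finset.mem_range, Nat.lt_succ_iff] at hj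
  by_cases h1 : j = i
  · subst h1
    rw [if_pos rfl]
    have hr : regenRate lam alpha N (1, j) (1, j+1) = lam * ((N:ℝ) - (j:ℝ)) := by
      simp [regenRate, starRate, show j + 1 ≤ N by omega]
    rw [hr]
  · rw [if_neg h1]
    have hr : regenRate lam alpha N (1, j) (1, i+1) = 0 := by
      have h3 : ¬ (i + 1 = j + 1) := by omega
      have h2 : ¬ (j = i + 2) := by omega
      simp [regenRate, starRate, h3, h2]
      exact fun h => absurd h.symm h1
    rw [hr, mul_zero]

lemma row01 {i : ℕ} (hi : i + 1 ≤ N) :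
    ∑ j ∈ Finset.range (N+1), μ (0, j) * regenRate lam alpha N (0, j) (1, i+1)
      = μ (0, i+1) * (lam * ((i:ℝ) + 1)) := by
  rw [Finset.sum_congr rfl (g := fun j => if j = i+1 then μ (0, i+1) * (lam * ((i:ℝ) + 1))
      else 0) ?_, sum_one_ite _ (by simp; omega)]
  intro j hj
  simp only [Finset.mem_range, Nat.lt_succ_iff] at hj
  by_cases h1 : j = i + 1
  · subst h1
    rw [if_pos rfl]
    have hr : regenRate lam alpha N (0, i+1) (1, i+1) = lam * ((i:ℝ) + 1) := by
      simp [regenRate, starRate, hi, show 1 ≤ i + 1 by omega]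
      all_goals (push_cast; ring)
    rw [hr]
  · rw [if_neg h1]
    have hr : regenRate lam alpha N (0, j) (1, i+1) = 0 := by
      have h2 : ¬ (i + 1 = j) := by omega
      simp [regenRate, starRate, h2]
    rw [hr, mul_zero]

lemma row00 {i : ℕ} (hi : i + 2 ≤ N) :
    ∑ j ∈ Finset.range (N+1), μ (0, j) * regenRate lam alpha N (0, j) (0, i+1)
      = μ (0, i+2) * ((i:ℝ) + 2) := by
  rw [Finset.sum_congr rfl (g := fun j => if j = i+2 then μ (0, i+2) * ((i:ℝ) + 2)
      else 0) ?_, sum_one_ite _ (by simp; omega)]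
  intro j hj
  simp only [Finset.mem_range, Nat.lt_succ_iff] at hj
  by_cases h1 : j = i + 2
  · subst h1
    rw [if_pos rfl]
    have hr : regenRate lam alpha N (0, i+2) (0, i+1) = ((i:ℝ) + 2) := by
      simp [regenRate, starRate, hi]
      all_goals (push_cast; ring)
    rw [hr]
  · rw [if_neg h1]
    have hr : regenRate lam alpha N (0, j) (0, i+1) = 0 := by
      have h2 : ¬ (j = i + 2) := h1
      simp [regenRate, starRate, h2]
    rw [hr, mul_zero]

lemma row00N :
    ∑ j ∈ Finset.range (N+1), μ (0, j) * regenRate lam alpha N (0, j) (0, N) = 0 := by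
  refine Finset.sum_eq_zero fun j hj => ?_
  simp only [Finset.mem_range, Nat.lt_succ_iff] at hj
  have hr : regenRate lam alpha N (0, j) (0, N) = 0 := by
    have h2 : ¬ (j = N + 1) := by omega
    simp [regenRate, starRate, h2]
  rw [hr, mul_zero]

lemma row10 {k : ℕ} (hk : k ≤ N) :
    ∑ j ∈ Finset.range (N+1), μ (1, j) * regenRate lam alpha N (1, j) (0, k)
      = μ (1, k) := by
  rw [Finset.sum_congr rfl (g := fun j => if j = k then μ (1, k) else 0) ?_,
    sum_one_ite _ (by simp; omega)]
  intro j hj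
  simp only [Finset.mem_range, Nat.lt_succ_iff] at hj
  by_cases h1 : j = k
  · subst h1
    rw [if_pos rfl]
    have hr : regenRate lam alpha N (1, j) (0, j) = 1 := by
      simp [regenRate, starRate, hj]
    rw [hr, mul_one]
  · rw [if_neg h1]
    have hr : regenRate lam alpha N (1, j) (0, k) = 0 := by
      have h2 : ¬ (k = j) := fun h => h1 h.symm
      simp [regenRate, starRate, h2]
    rw [hr, mul_zero]

end Rows
section Balance

variable {lam alpha : ℝ} {N : ℕ} (μ : ℕ × ℕ → ℝ)

lemma out1a {t : ℕ} (ht : t + 2 ≤ N) :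
    ∑ y ∈ starStates N, regenRate lam alpha N (1, t+1) y
      = lam * ((N:ℝ) - ((t:ℝ)+1)) + (((t:ℝ)+1) + 1) := by
  rw [sum_starStates]
  have h0 : ∑ j ∈ Finset.range (N+1), regenRate lam alpha N (1, t+1) (0, j) = 1 := by
    rw [Finset.sum_congr rfl (g := fun j => if j = t+1 then (1:ℝ) else 0) ?_,
      sum_one_ite _ (by simp; omega)]
    intro j hj
    simp only [Finset.mem_range, Nat.lt_succ_iff] at hj
    by_cases h1 : j = t + 1
    · subst h1
      rw [if_pos rfl]
      simp [regenRate, starRate, show t + 1 ≤ N by omega]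
    · rw [if_neg h1]
      have h2 : ¬ (j = t + 1) := h1
      simp [regenRate, starRate, h2]
  have h1 : ∑ j ∈ Finset.range (N+1), regenRate lam alpha N (1, t+1) (1, j)
      = lam * ((N:ℝ) - ((t:ℝ)+1)) + ((t:ℝ)+1) := by
    rw [Finset.sum_congr rfl (g := fun j => if j = t+2 then lam * ((N:ℝ) - ((t:ℝ)+1))
        else if j = t then ((t:ℝ)+1) else 0) ?_,
      sum_two_ite _ _ (by omega) (by simp; omega) (by simp; omega)]
    intro j hj
    simp only [Finset.mem_range, Nat.lt_succ_iff] at hj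
    by_cases h1 : j = t + 2
    · subst h1
      rw [if_pos rfl]
      simp [regenRate, starRate, ht]
      all_goals (push_cast; ring)
    · by_cases h2 : j = t
      · subst h2
        rw [if_neg h1, if_pos rfl]
        have h3 : ¬ (j = j + 1 + 1) := by omega
        simp [regenRate, starRate, h3, show j + 1 ≤ N by omega]
        all_goals (push_cast; ring)
      · rw [if_neg h1, if_neg h2]
        have h3 : ¬ (j = t + 1 + 1) := by omega
        have h4 : ¬ (t + 1 = j + 1) := by omega
        simp [regenRate, starRate, h3, h4]
        exact fun h => absurd h.symm h2
  rw [h0, h1]; ring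

lemma out1b {t : ℕ} :
    ∑ y ∈ starStates (t+1), regenRate lam alpha (t+1) (1, t+1) y = ((t:ℝ)+1) + 1 := by
  rw [sum_starStates]
  have h0 : ∑ j ∈ Finset.range (t+2), regenRate lam alpha (t+1) (1, t+1) (0, j) = 1 := by
    rw [Finset.sum_congr rfl (g := fun j => if j = t+1 then (1:ℝ) else 0) ?_,
      sum_one_ite _ (by simp)]
    intro j hj
    simp only [Finset.mem_range, Nat.lt_succ_iff] at hj
    by_cases h1 : j = t + 1
    · subst h1
      rw [if_pos rfl]
      simp [regenRate, starRate]
    · rw [if_neg h1]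
      have h2 : ¬ (j = t + 1) := h1
      simp [regenRate, starRate, h2]
  have h1 : ∑ j ∈ Finset.range (t+2), regenRate lam alpha (t+1) (1, t+1) (1, j)
      = ((t:ℝ)+1) := by
    rw [Finset.sum_congr rfl (g := fun j => if j = t then ((t:ℝ)+1) else 0) ?_,
      sum_one_ite _ (by simp)]
    intro j hj
    simp only [Finset.mem_range, Nat.lt_succ_iff] at hj
    by_cases h2 : j = t
    · subst h2
      rw [if_pos rfl]
      have h3 : ¬ (j = j + 1 + 1) := by omega
      simp [regenRate, starRate, h3]
      all_goals (push_cast; ring)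
    · rw [if_neg h2]
      have h3 : ¬ (j = t + 1 + 1) := by omega
      have h4 : ¬ (t + 1 = j + 1) := by omega
      simp [regenRate, starRate, h3, h4]
      exact fun h => absurd h.symm h2
  rw [h0, h1]; ring

lemma out0 {t : ℕ} (ht : t + 1 ≤ N) :
    ∑ y ∈ starStates N, regenRate lam alpha N (0, t+1) y
      = ((t:ℝ)+1) + lam * ((t:ℝ)+1) := by
  rw [sum_starStates]
  have h0 : ∑ j ∈ Finset.range (N+1), regenRate lam alpha N (0, t+1) (0, j)
      = ((t:ℝ)+1) := by
    rw [Finset.sum_congr rfl (g := fun j => if j = t then ((t:ℝ)+1) else 0) ?_,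
      sum_one_ite _ (by simp; omega)]
    intro j hj
    simp only [Finset.mem_range, Nat.lt_succ_iff] at hj
    by_cases h1 : j = t
    · subst h1
      rw [if_pos rfl]
      simp [regenRate, starRate, ht]
      all_goals (push_cast; ring)
    · rw [if_neg h1]
      have h2 : ¬ (t + 1 = j + 1) := by omega
      simp [regenRate, starRate, h2]
      exact fun h => absurd h.symm h1
  have h1 : ∑ j ∈ Finset.range (N+1), regenRate lam alpha N (0, t+1) (1, j)
      = lam * ((t:ℝ)+1) := by
    rw [Finset.sum_congr rfl (g := fun j => if j = t+1 then lam * ((t:ℝ)+1) else 0) ?_,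
      sum_one_ite _ (by simp; omega)]
    intro j hj
    simp only [Finset.mem_range, Nat.lt_succ_iff] at hj
    by_cases h1 : j = t + 1
    · subst h1
      rw [if_pos rfl]
      simp [regenRate, starRate, ht]
      all_goals (push_cast; ring)
    · rw [if_neg h1]
      have h2 : ¬ (j = t + 1) := h1
      simp [regenRate, starRate, h2]
  rw [h0, h1]

lemma eqE1 (hb : IsBalanced lam alpha N μ) {i : ℕ} (hi : i + 2 ≤ N) :
    μ (0, i+1) * (lam * ((i:ℝ) + 1)) + (μ (1, i) * (lam * ((N:ℝ) - (i:ℝ)))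
      + μ (1, i+2) * ((i:ℝ) + 2))
    = μ (1, i+1) * (lam * ((N:ℝ) - ((i:ℝ)+1)) + (((i:ℝ)+1) + 1)) := by
  have h := hb (1, i+1) (mem_starStates.mpr ⟨Or.inr rfl, by omega⟩)
  rw [sum_starStates (fun y => μ y * regenRate lam alpha N y (1, i+1))] at h
  rw [out1a (by omega), row01 μ (by omega), row11a μ hi] at h
  exact h

lemma eqE1N {t : ℕ} (hb : IsBalanced lam alpha (t+1) μ) :
    μ (0, t+1) * (lam * ((t:ℝ) + 1)) + μ (1, t) * (lam * (((t:ℝ)+1) - (t:ℝ)))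
    = μ (1, t+1) * (((t:ℝ)+1) + 1) := by
  have h := hb (1, t+1) (mem_starStates.mpr ⟨Or.inr rfl, by omega⟩)
  rw [sum_starStates (fun y => μ y * regenRate lam alpha (t+1) y (1, t+1))] at h
  rw [out1b, row01 μ (by omega), row11b μ rfl] at h
  push_cast at h ⊢
  linear_combination h

lemma eqE0 (hb : IsBalanced lam alpha N μ) {i : ℕ} (hi : i + 2 ≤ N) :
    μ (0, i+2) * ((i:ℝ) + 2) + μ (1, i+1)
    = μ (0, i+1) * (((i:ℝ)+1) + lam * ((i:ℝ)+1)) := by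
  have h := hb (0, i+1) (mem_starStates.mpr ⟨Or.inl rfl, by omega⟩)
  rw [sum_starStates (fun y => μ y * regenRate lam alpha N y (0, i+1))] at h
  rw [out0 (by omega), row00 μ hi, row10 μ (by omega)] at h
  linear_combination h

lemma eqE0N {t : ℕ} (hb : IsBalanced lam alpha (t+1) μ) :
    μ (1, t+1) = μ (0, t+1) * (((t:ℝ)+1) + lam * ((t:ℝ)+1)) := by
  have h := hb (0, t+1) (mem_starStates.mpr ⟨Or.inl rfl, by omega⟩)
  rw [sum_starStates (fun y => μ y * regenRate lam alpha (t+1) y (0, t+1))] at h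
  rw [out0 (by omega), row00N μ, row10 μ (by omega)] at h
  linear_combination h

lemma cut_balance (hb : IsBalanced lam alpha N μ) (n : ℕ) (hn : n + 1 ≤ N) :
    lam * ((N:ℝ) - (n:ℝ)) * μ (1, n) = ((n:ℝ) + 1) * (μ (1, n+1) + μ (0, n+1)) := by
  obtain ⟨d, hd⟩ : ∃ d, n + 1 + d = N := ⟨N - (n+1), by omega⟩
  clear hn
  induction d generalizing n with
  | zero =>
    have hN : N = n + 1 := by omega
    subst hN
    have h1 := eqE1N μ hb
    have h0 := eqE0N μ hb
    push_cast at h1 h0 ⊢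
    linear_combination h1 + h0
  | succ d ih =>
    have h1 := eqE1 μ hb (i := n) (by omega)
    have h0 := eqE0 μ hb (i := n) (by omega)
    have hc := ih (n+1) (by omega)
    push_cast at h1 h0 hc ⊢
    linear_combination h1 + h0 + hc

end Balance
section Bounds

variable {lam alpha : ℝ} {N : ℕ} (μ : ℕ × ℕ → ℝ)

/-- Upper bound: `u_k * D_k ≤ v_k` where `D_k = (1+2λ)k - λN`. -/
lemma u_upper (hlam : 0 < lam) (hb : IsBalanced lam alpha N μ)
    (hpos : ∀ x ∈ starStates N, 0 < μ x) :
    ∀ k, 1 ≤ k → k ≤ N → 0 < (1+2*lam)*(k:ℝ) - lam*(N:ℝ) →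
      μ (0,k) * ((1+2*lam)*(k:ℝ) - lam*(N:ℝ)) ≤ μ (1,k) := by
  intro k hk1 hkN hD
  obtain ⟨d, hd⟩ : ∃ d, k + d = N := ⟨N - k, by omega⟩
  induction d generalizing k with
  | zero =>
    obtain ⟨t, rfl⟩ : ∃ t, k = t + 1 := ⟨k - 1, by omega⟩
    have hN : N = t + 1 := by omega
    subst hN
    have h := eqE0N μ hb
    push_cast
    nlinarith [h]
  | succ d ih =>
    obtain ⟨t, rfl⟩ : ∃ t, k = t + 1 := ⟨k - 1, by omega⟩
    have hu2 : 0 < μ (0, t+2) := hpos _ (mem_starStates.mpr ⟨Or.inl rfl, by omega⟩)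
    have hv2 : 0 < μ (1, t+2) := hpos _ (mem_starStates.mpr ⟨Or.inr rfl, by omega⟩)
    have hv1 : 0 < μ (1, t+1) := hpos _ (mem_starStates.mpr ⟨Or.inr rfl, by omega⟩)
    have hD2 : 0 < (1+2*lam)*((t:ℝ)+2) - lam*(N:ℝ) := by push_cast at hD ⊢; nlinarith
    have ih1 : μ (0, t+2) * ((1+2*lam)*((t:ℝ)+2) - lam*(N:ℝ)) ≤ μ (1, t+2) := by
      have := ih (t+2) (by omega) (by omega) (by push_cast at hD2 ⊢; linarith) (by omega)
      push_cast at this ⊢; linarith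
    have hcut := cut_balance μ hb (t+1) (by omega)
    have he0 := eqE0 μ hb (i := t) (by omega)
    -- key : u₂ (D₁ - 1) ≤ v₂
    have key : μ (0, t+2) * ((1+2*lam)*((t:ℝ)+1) - lam*(N:ℝ) - 1) ≤ μ (1, t+2) := by
      nlinarith [mul_nonneg hu2.le (by linarith : (0:ℝ) ≤ 2*lam)]
    -- key2 : (t+2) u₂ D₁ ≤ (t+2)(v₂ + u₂)
    have key2 : ((t:ℝ)+2) * (μ (0, t+2) * ((1+2*lam)*((t:ℝ)+1) - lam*(N:ℝ)))
        ≤ ((t:ℝ)+2) * (μ (1, t+2) + μ (0, t+2)) := by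
      nlinarith [key, mul_nonneg (by positivity : (0:ℝ) ≤ (t:ℝ)+2) hu2.le]
    -- via cut: (t+2)(v₂+u₂) = λ(N-(t+1)) v₁
    have key3 : ((t:ℝ)+2) * (μ (0, t+2) * ((1+2*lam)*((t:ℝ)+1) - lam*(N:ℝ)))
        ≤ lam * ((N:ℝ) - ((t:ℝ)+1)) * μ (1, t+1) := by
      push_cast at hcut
      linarith [key2]
    -- combine with he0
    have H : (μ (0, t+1) * ((1+lam)*((t:ℝ)+1))) * ((1+2*lam)*((t:ℝ)+1) - lam*(N:ℝ))
        ≤ μ (1, t+1) * ((1+lam)*((t:ℝ)+1)) := by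
      have he0' : μ (0, t+2) * ((t:ℝ) + 2) + μ (1, t+1)
          = μ (0, t+1) * ((1+lam)*((t:ℝ)+1)) := by linarith [he0]
      nlinarith [key3, hv1]
    push_cast
    nlinarith [H, mul_pos (by linarith : (0:ℝ) < 1+lam) (by positivity : (0:ℝ) < (t:ℝ)+1)]

/-- Pure arithmetic step for the lower bound. -/
lemma lower_step {lam c v1 v2 u1 u2 K φ D1 : ℝ}
    (hlam : 0 < lam) (hcpos : 0 < c) (hclam : c * lam = 6 + 4*lam)
    (hu2 : 0 < u2) (hv1 : 0 < v1) (hu1 : 0 < u1) (hv2 : 0 < v2)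
    (hD : 0 < D1) (hK : 0 < K)
    (hcut : φ * v1 = K * (v2 + u2))
    (he0 : u2 * K + v1 = u1 * (φ + D1))
    (hφ : φ * lam ≤ 2 * (D1 + 1 + 2*lam))
    (ih1 : v2 ≤ u2 * (D1 + 1 + 2*lam + c)) :
    v1 ≤ u1 * (D1 + c) := by
  have hφD1 : 0 < φ + D1 := by
    rcases le_or_gt φ 0 with h | h
    · nlinarith [mul_pos hK (by linarith : 0 < v2 + u2), hv1]
    · linarith
  by_cases hφc : φ ≤ c
  · nlinarith [mul_le_mul_of_nonneg_left hφc hu1.le, mul_nonneg hu2.le hK.le]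
  · push_neg at hφc
    have hφpos : 0 < φ := lt_trans hcpos hφc
    have h3 : φ * (2+2*lam) ≤ c * (D1 + 1 + 2*lam) := by
      have hD2 : 0 < D1 + 1 + 2*lam := by linarith
      have h1 : φ * (2+2*lam) * lam ≤ 2 * (D1 + 1 + 2*lam) * (2+2*lam) := by
        nlinarith [hφ, hlam]
      have h2 : 2 * (D1 + 1 + 2*lam) * (2+2*lam) ≤ c * lam * (D1 + 1 + 2*lam) := by
        rw [hclam]; nlinarith [hD2]
      nlinarith [h1, h2, hlam]
    have key : (φ - c) * (D1 + 1 + 2*lam + c + 1) ≤ φ * (D1 + c) := by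
      nlinarith [h3, hcpos]
    have key2 : v2 + u2 ≤ u2 * (D1 + 1 + 2*lam + c + 1) := by nlinarith [ih1]
    have key3 : (φ - c) * (φ * v1) ≤ K * u2 * (φ * (D1 + c)) := by
      rw [hcut]
      calc (φ - c) * (K * (v2 + u2))
          ≤ (φ - c) * (K * (u2 * (D1 + 1 + 2*lam + c + 1))) := by
            have h5 : K * (v2 + u2) ≤ K * (u2 * (D1 + 1 + 2*lam + c + 1)) :=
              mul_le_mul_of_nonneg_left key2 hK.le
            exact mul_le_mul_of_nonneg_left h5 (by linarith)
        _ ≤ K * u2 * (φ * (D1 + c)) := by nlinarith [key, mul_pos hK hu2]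
    have key4 : (φ - c) * v1 ≤ K * u2 * (D1 + c) := by nlinarith [key3, hφpos]
    have H : v1 * (φ + D1) ≤ (u2 * K + v1) * (D1 + c) := by nlinarith [key4]
    rw [he0] at H
    nlinarith [H, hφD1]

/-- Lower bound: `v_k ≤ u_k * (D_k + c)` with `c = (6+4λ)/λ`, valid where
`λ(N-k) ≤ (2/λ) D_{k+1}`. -/
lemma u_lower (hlam : 0 < lam) (hb : IsBalanced lam alpha N μ)
    (hpos : ∀ x ∈ starStates N, 0 < μ x) :
    ∀ k, 1 ≤ k → k ≤ N → 0 < (1+2*lam)*(k:ℝ) - lam*(N:ℝ) →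
      lam * ((N:ℝ) - (k:ℝ)) * lam ≤ 2 * ((1+2*lam)*((k:ℝ)+1) - lam*(N:ℝ)) →
      μ (1,k) ≤ μ (0,k) * ((1+2*lam)*(k:ℝ) - lam*(N:ℝ) + (6+4*lam)/lam) := by
  intro k hk1 hkN hD hphi
  obtain ⟨d, hd⟩ : ∃ d, k + d = N := ⟨N - k, by omega⟩
  induction d generalizing k with
  | zero =>
    obtain ⟨t, rfl⟩ : ∃ t, k = t + 1 := ⟨k - 1, by omega⟩
    have hN : N = t + 1 := by omega
    subst hN
    have h := eqE0N μ hb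
    have hu1 : 0 < μ (0, t+1) := hpos _ (mem_starStates.mpr ⟨Or.inl rfl, by omega⟩)
    have hc : 0 < (6+4*lam)/lam := by positivity
    push_cast
    nlinarith [h, hu1]
  | succ d ih =>
    obtain ⟨t, rfl⟩ : ∃ t, k = t + 1 := ⟨k - 1, by omega⟩
    have hu2 : 0 < μ (0, t+2) := hpos _ (mem_starStates.mpr ⟨Or.inl rfl, by omega⟩)
    have hv2 : 0 < μ (1, t+2) := hpos _ (mem_starStates.mpr ⟨Or.inr rfl, by omega⟩)
    have hv1 : 0 < μ (1, t+1) := hpos _ (mem_starStates.mpr ⟨Or.inr rfl, by omega⟩)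
    have hu1 : 0 < μ (0, t+1) := hpos _ (mem_starStates.mpr ⟨Or.inl rfl, by omega⟩)
    push_cast at hD hphi
    have hD2 : 0 < (1+2*lam)*((t:ℝ)+2) - lam*(N:ℝ) := by nlinarith
    have hphi2 : lam * ((N:ℝ) - ((t:ℝ)+2)) * lam ≤ 2 * ((1+2*lam)*(((t:ℝ)+2)+1) - lam*(N:ℝ)) := by
      nlinarith [mul_pos hlam hlam, hlam]
    have ih1 : μ (1, t+2) ≤ μ (0, t+2) * ((1+2*lam)*((t:ℝ)+2) - lam*(N:ℝ) + (6+4*lam)/lam) := by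
      have := ih (t+2) (by omega) (by omega) (by push_cast; linarith)
        (by push_cast; linarith) (by omega)
      push_cast at this; linarith
    have hcut := cut_balance μ hb (t+1) (by omega)
    simp only [show t+1+1 = t+2 from rfl] at hcut
    have he0 := eqE0 μ hb (i := t) (by omega)
    push_cast at hcut he0 ⊢
    have hclam : ((6+4*lam)/lam) * lam = 6 + 4*lam := by field_simp
    have goal := lower_step (lam := lam) (c := (6+4*lam)/lam)
      (v1 := μ (1,t+1)) (v2 := μ (1,t+2)) (u1 := μ (0,t+1)) (u2 := μ (0,t+2))
      (K := (t:ℝ)+2) (φ := lam * ((N:ℝ) - ((t:ℝ)+1)))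
      (D1 := (1+2*lam)*((t:ℝ)+1) - lam*(N:ℝ))
      hlam (by positivity) hclam hu2 hv1 hu1 hv2 hD (by positivity)
      (by linarith [hcut]) (by linarith [he0]) (by nlinarith) (by nlinarith [ih1])
    linarith [goal]

end Bounds
section ProdFormula

variable {lam alpha : ℝ} {N : ℕ} (μ : ℕ × ℕ → ℝ)

lemma prod_formula (hlam : 0 < lam) (hb : IsBalanced lam alpha N μ)
    (hpos : ∀ x ∈ starStates N, 0 < μ x) :
    ∀ d n, n + d = N → μ (1,n) * lam^d
      = (N.choose n : ℝ) * μ (1,N)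
          * ∏ k ∈ Finset.Ico (n+1) (N+1), (1 + μ (0,k) / μ (1,k)) := by
  intro d
  induction d with
  | zero =>
    intro n hn
    have hnN : n = N := by omega
    subst hnN
    simp [Nat.choose_self]
  | succ d ih =>
    intro n hn
    have hIH := ih (n+1) (by omega)
    have hcut := cut_balance μ hb n (by omega)
    have hvpos : 0 < μ (1, n+1) := hpos _ (mem_starStates.mpr ⟨Or.inr rfl, by omega⟩)
    have hsplit := Finset.prod_eq_prod_Ico_succ_bot (show n+1 < N+1 by omega)
      (fun k => 1 + μ (0,k) / μ (1,k))
    have hchoose : ((N:ℝ) - n) * (N.choose n : ℝ) = ((n:ℝ)+1) * (N.choose (n+1) : ℝ) := by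
      have h := Nat.choose_succ_right_eq N n
      have hcast := congrArg (Nat.cast : ℕ → ℝ) h
      push_cast [Nat.cast_sub (by omega : n ≤ N)] at hcast
      linarith
    have hcancel : ((N:ℝ) - (n:ℝ)) ≠ 0 := by
      have : (n:ℝ) + 1 ≤ (N:ℝ) := by exact_mod_cast show n + 1 ≤ N by omega
      linarith
    apply mul_right_cancel₀ hcancel
    calc μ (1,n) * lam^(d+1) * ((N:ℝ) - n)
        = lam^d * (lam * ((N:ℝ) - n) * μ (1,n)) := by ring
      _ = lam^d * (((n:ℝ)+1) * (μ (1,n+1) + μ (0,n+1))) := by rw [hcut]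
      _ = ((n:ℝ)+1) * (1 + μ (0,n+1) / μ (1,n+1)) * (μ (1,n+1) * lam^d) := by
          field_simp
      _ = ((n:ℝ)+1) * (1 + μ (0,n+1) / μ (1,n+1))
            * ((N.choose (n+1) : ℝ) * μ (1,N)
              * ∏ k ∈ Finset.Ico (n+2) (N+1), (1 + μ (0,k) / μ (1,k))) := by rw [hIH]
      _ = (N.choose n : ℝ) * μ (1,N)
            * (∏ k ∈ Finset.Ico (n+1) (N+1), (1 + μ (0,k) / μ (1,k))) * ((N:ℝ) - n) := by
          rw [hsplit]
          linear_combination (-(μ (1,N)) * (1 + μ (0,n+1) / μ (1,n+1))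
            * ∏ k ∈ Finset.Ico (n+2) (N+1), (1 + μ (0,k) / μ (1,k))) * hchoose

end ProdFormula
section Telescope

lemma sum_telescope_Ico (g : ℕ → ℝ) {a b : ℕ} (h : a ≤ b) :
    ∑ j ∈ Finset.Ico a b, (g (j+1) - g j) = g b - g a := by
  rw [Finset.sum_Ico_eq_sub _ h, Finset.sum_range_sub g, Finset.sum_range_sub g]
  ring

/-- Sandwich for the log of the correction product. -/
lemma log_prod_sandwich (lam c : ℝ) (hlam : 0 < lam) (hc : 0 < c)
    {m N : ℕ} (hmN : m ≤ N) (D : ℕ → ℝ) (ρ : ℕ → ℝ)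
    (hDstep : ∀ j, D (j+1) = D j + (1+2*lam))
    (hDpos : ∀ j, m ≤ j → j ≤ N → 0 < D j)
    (hub : ∀ j, m ≤ j → j < N → ρ (j+1) ≤ 1 / D (j+1))
    (hlb : ∀ j, m ≤ j → j < N → 1 / (D (j+1) + c) ≤ ρ (j+1)) :
    (Real.log (D N + (c+2+2*lam)) - Real.log (D m + (c+2+2*lam))) / (1+2*lam)
      ≤ Real.log (∏ j ∈ Finset.Ico m N, (1 + ρ (j+1))) ∧
    Real.log (∏ j ∈ Finset.Ico m N, (1 + ρ (j+1)))
      ≤ (Real.log (D N) - Real.log (D m)) / (1+2*lam) := by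
  have h12 : (0:ℝ) < 1 + 2*lam := by linarith
  have hρpos : ∀ j, m ≤ j → j < N → 0 < ρ (j+1) := by
    intro j hj hjN
    have hD1 : 0 < D (j+1) := hDpos (j+1) (by omega) (by omega)
    have := hlb j hj hjN
    have : 0 < 1 / (D (j+1) + c) := by positivity
    linarith [hlb j hj hjN]
  have hlog : Real.log (∏ j ∈ Finset.Ico m N, (1 + ρ (j+1)))
      = ∑ j ∈ Finset.Ico m N, Real.log (1 + ρ (j+1)) := by
    apply Real.log_prod
    intro j hj
    simp only [Finset.mem_Ico] at hj
    have := hρpos j hj.1 hj.2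
    positivity
  rw [hlog]
  constructor
  · -- lower bound
    have hstep : ∀ j ∈ Finset.Ico m N,
        (Real.log (D (j+1) + (c+2+2*lam)) - Real.log (D j + (c+2+2*lam))) / (1+2*lam)
          ≤ Real.log (1 + ρ (j+1)) := by
      intro j hj
      simp only [Finset.mem_Ico] at hj
      have hDj : 0 < D j := hDpos j hj.1 (by omega)
      have hDj1 : 0 < D (j+1) := hDpos (j+1) (by omega) (by omega)
      have hρ := hlb j hj.1 hj.2
      have hρp := hρpos j hj.1 hj.2
      -- log(1+ρ) ≥ log(1+1/(D₊+c)) ≥ 1/(D₊+c+1) = 1/(Dj+c+1+2λ)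
      have h1 : Real.log (1 + 1/(D (j+1) + c)) ≤ Real.log (1 + ρ (j+1)) := by
        apply Real.log_le_log (by positivity)
        linarith
      have h2 : 1 - 1/(1 + 1/(D (j+1) + c)) ≤ Real.log (1 + 1/(D (j+1) + c)) := by
        have hx : (0:ℝ) < 1/(1 + 1/(D (j+1) + c)) := by positivity
        have := Real.log_le_sub_one_of_pos hx
        rw [Real.log_div one_ne_zero (by positivity)] at this
        simp only [Real.log_one] at this
        linarith
      have h3 : 1 - 1/(1 + 1/(D (j+1) + c)) = 1/(D j + (c+2+2*lam)) := by
        have hDc : 0 < D (j+1) + c := by linarith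
        rw [hDstep j]
        field_simp
        ring
      -- telescoping side: log(Dj1+c2) − log(Dj+c2) ≤ (1+2λ)/(Dj+c2)
      have h4 : Real.log (D (j+1) + (c+2+2*lam)) - Real.log (D j + (c+2+2*lam))
          ≤ (1+2*lam) / (D j + (c+2+2*lam)) := by
        have hq : 0 < D j + (c+2+2*lam) := by linarith
        have hq1 : 0 < D (j+1) + (c+2+2*lam) := by linarith [hDj1]
        have := Real.log_le_sub_one_of_pos (show 0 < (D (j+1) + (c+2+2*lam)) / (D j + (c+2+2*lam)) by positivity)
        rw [Real.log_div (by positivity) (by positivity)] at this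
        have heq : (D (j+1) + (c+2+2*lam)) / (D j + (c+2+2*lam)) - 1
            = (1+2*lam) / (D j + (c+2+2*lam)) := by
          rw [hDstep j]; field_simp; ring
        linarith [heq ▸ this]
      rw [div_le_iff₀ h12]
      calc Real.log (D (j+1) + (c+2+2*lam)) - Real.log (D j + (c+2+2*lam))
          ≤ (1+2*lam) / (D j + (c+2+2*lam)) := h4
        _ = (1 / (D j + (c+2+2*lam))) * (1+2*lam) := by ring
        _ ≤ Real.log (1 + ρ (j+1)) * (1+2*lam) := by
            have : 1 / (D j + (c+2+2*lam)) ≤ Real.log (1 + ρ (j+1)) := by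
              rw [← h3]
              linarith [h1, h2]
            nlinarith [this, h12]
    calc (Real.log (D N + (c+2+2*lam)) - Real.log (D m + (c+2+2*lam))) / (1+2*lam)
        = ∑ j ∈ Finset.Ico m N,
            (Real.log (D (j+1) + (c+2+2*lam)) - Real.log (D j + (c+2+2*lam))) / (1+2*lam) := by
          rw [← Finset.sum_div, sum_telescope_Ico (fun j => Real.log (D j + (c+2+2*lam))) hmN]
      _ ≤ ∑ j ∈ Finset.Ico m N, Real.log (1 + ρ (j+1)) := Finset.sum_le_sum hstep
  · -- upper bound
    have hstep : ∀ j ∈ Finset.Ico m N,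
        Real.log (1 + ρ (j+1)) ≤ (Real.log (D (j+1)) - Real.log (D j)) / (1+2*lam) := by
      intro j hj
      simp only [Finset.mem_Ico] at hj
      have hDj : 0 < D j := hDpos j hj.1 (by omega)
      have hDj1 : 0 < D (j+1) := hDpos (j+1) (by omega) (by omega)
      have hρ := hub j hj.1 hj.2
      have hρp := hρpos j hj.1 hj.2
      have h1 : Real.log (1 + ρ (j+1)) ≤ ρ (j+1) := by
        have := Real.log_le_sub_one_of_pos (show (0:ℝ) < 1 + ρ (j+1) by linarith)
        linarith
      -- log(D₊) − log(Dj) ≥ (1+2λ)/D₊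
      have h4 : (1+2*lam) / (D (j+1)) ≤ Real.log (D (j+1)) - Real.log (D j) := by
        have := Real.log_le_sub_one_of_pos (show 0 < D j / D (j+1) by positivity)
        rw [Real.log_div (by positivity) (by positivity)] at this
        have heq : D j / D (j+1) - 1 = -((1+2*lam) / D (j+1)) := by
          field_simp
          linarith [hDstep j]
        linarith [heq ▸ this]
      rw [le_div_iff₀ h12]
      have h5 : ρ (j+1) * (1+2*lam) ≤ (1+2*lam) / (D (j+1)) :=
        calc ρ (j+1) * (1+2*lam) ≤ (1/(D (j+1))) * (1+2*lam) :=
              mul_le_mul_of_nonneg_right hρ h12.le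
          _ = (1+2*lam)/(D (j+1)) := by ring
      calc Real.log (1 + ρ (j+1)) * (1+2*lam) ≤ ρ (j+1) * (1+2*lam) := by nlinarith [h1, h12]
        _ ≤ (1+2*lam) / (D (j+1)) := h5
        _ ≤ Real.log (D (j+1)) - Real.log (D j) := h4
    calc ∑ j ∈ Finset.Ico m N, Real.log (1 + ρ (j+1))
        ≤ ∑ j ∈ Finset.Ico m N, (Real.log (D (j+1)) - Real.log (D j)) / (1+2*lam) :=
          Finset.sum_le_sum hstep
      _ = (Real.log (D N) - Real.log (D m)) / (1+2*lam) := by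
          rw [← Finset.sum_div, sum_telescope_Ico (fun j => Real.log (D j)) hmN]

end Telescope
section FloorFacts

noncomputable def mfl (lam : ℝ) (N : ℕ) : ℕ := ⌊lam * N / (1 + lam)⌋₊

variable {lam : ℝ}

lemma mfl_le (hlam : 0 < lam) (N : ℕ) : (mfl lam N : ℝ) ≤ lam * N / (1 + lam) :=
  Nat.floor_le (by positivity)

lemma lt_mfl (hlam : 0 < lam) (N : ℕ) : lam * N / (1 + lam) - 1 < (mfl lam N : ℝ) :=
  Nat.sub_one_lt_floor _

lemma mfl_lt (hlam : 0 < lam) {N : ℕ} (hN : 1 ≤ N) : mfl lam N < N := by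
  have h1 : (mfl lam N : ℝ) ≤ lam * N / (1 + lam) := mfl_le hlam N
  have hN1 : (1:ℝ) ≤ (N:ℝ) := by exact_mod_cast hN
  have h2 : lam * N / (1 + lam) < (N:ℝ) := by
    rw [div_lt_iff₀ (by linarith)]
    nlinarith
  exact_mod_cast lt_of_le_of_lt h1 h2

lemma tendsto_lamN : Filter.Tendsto (fun N : ℕ => lam * N / (1 + lam)) Filter.atTop Filter.atTop → True := fun _ => trivial

lemma tendsto_mfl_atTop (hlam : 0 < lam) :
    Filter.Tendsto (fun N : ℕ => mfl lam N) Filter.atTop Filter.atTop := by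
  rw [Filter.tendsto_atTop]
  intro b
  have hlin : Filter.Tendsto (fun N : ℕ => lam * N / (1 + lam)) Filter.atTop Filter.atTop := by
    have h1 : Filter.Tendsto (fun N : ℕ => (N:ℝ)) Filter.atTop Filter.atTop :=
      tendsto_natCast_atTop_atTop
    have h2 := h1.atTop_mul_const (show 0 < lam/(1+lam) by positivity)
    refine h2.congr fun N => ?_
    field_simp
  filter_upwards [hlin.eventually_ge_atTop ((b:ℝ)+1)] with N hN
  have := lt_mfl hlam N
  have : (b:ℝ) < (mfl lam N : ℝ) := by linarith
  exact_mod_cast this.le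

lemma tendsto_sub_mfl_atTop (hlam : 0 < lam) :
    Filter.Tendsto (fun N : ℕ => N - mfl lam N) Filter.atTop Filter.atTop := by
  rw [Filter.tendsto_atTop]
  intro b
  have hlin : Filter.Tendsto (fun N : ℕ => (N:ℝ) / (1 + lam)) Filter.atTop Filter.atTop := by
    have h1 : Filter.Tendsto (fun N : ℕ => (N:ℝ)) Filter.atTop Filter.atTop :=
      tendsto_natCast_atTop_atTop
    have h2 := h1.atTop_mul_const (show 0 < 1/(1+lam) by positivity)
    refine h2.congr fun N => ?_
    field_simp
  filter_upwards [hlin.eventually_ge_atTop ((b:ℝ))] with N hN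
  have hm := mfl_le hlam N
  have hkey : (mfl lam N : ℝ) + b ≤ (N:ℝ) := by
    have : lam * N / (1+lam) + (N:ℝ)/(1+lam) = (N:ℝ) := by field_simp; ring
    linarith
  have : mfl lam N + b ≤ N := by exact_mod_cast hkey
  omega

lemma tendsto_mfl_div (hlam : 0 < lam) :
    Filter.Tendsto (fun N : ℕ => (mfl lam N : ℝ) / (N:ℝ)) Filter.atTop
      (𝓝 (lam / (1 + lam))) := by
  apply tendsto_of_tendsto_of_tendsto_of_le_of_le'
    (g := fun N : ℕ => lam/(1+lam) - 1/(N:ℝ)) (h := fun _ : ℕ => lam/(1+lam))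
  · have : Tendsto (fun N : ℕ => 1/(N:ℝ)) atTop (𝓝 0) := tendsto_one_div_atTop_nhds_zero_nat
    have h2 := Filter.Tendsto.const_sub (lam/(1+lam)) this
    simpa using h2
  · exact tendsto_const_nhds
  · filter_upwards [Filter.eventually_ge_atTop 1] with N hN
    have hNpos : (0:ℝ) < (N:ℝ) := by exact_mod_cast hN
    have h1 := lt_mfl hlam N
    have : (lam * N / (1+lam) - 1) / (N:ℝ) ≤ (mfl lam N : ℝ) / (N:ℝ) := by gcongr <;> linarith
    calc lam/(1+lam) - 1/(N:ℝ) = (lam * N / (1+lam) - 1) / (N:ℝ) := by field_simp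
      _ ≤ (mfl lam N : ℝ) / (N:ℝ) := this
  · filter_upwards [Filter.eventually_ge_atTop 1] with N hN
    have hNpos : (0:ℝ) < (N:ℝ) := by exact_mod_cast hN
    have h1 := mfl_le hlam N
    calc (mfl lam N : ℝ) / (N:ℝ) ≤ (lam * N / (1+lam)) / (N:ℝ) := by gcongr
      _ = lam/(1+lam) := by field_simp

end FloorFacts

section Entropy

lemma xlog_ge {x y : ℝ} (hx : 0 < x) (hy : 0 < y) : x - y ≤ x * Real.log (x/y) := by
  have h := Real.log_le_sub_one_of_pos (show 0 < y/x by positivity)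
  have hlog : Real.log (x/y) = - Real.log (y/x) := by
    rw [Real.log_div hx.ne' hy.ne', Real.log_div hy.ne' hx.ne']
    ring
  rw [hlog]
  have h2 : y/x - 1 = (y - x)/x := by field_simp
  rw [h2] at h
  have h3 := mul_le_mul_of_nonneg_left h hx.le
  rw [mul_div_cancel₀ _ hx.ne'] at h3
  nlinarith [h3]

lemma xlog_le {x y : ℝ} (hx : 0 < x) (hy : 0 < y) :
    x * Real.log (x/y) ≤ (x - y) + (x - y)^2 / y := by
  have h := Real.log_le_sub_one_of_pos (show 0 < x/y by positivity)
  have h2 : x/y - 1 = (x - y)/y := by field_simp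
  rw [h2] at h
  have h3 := mul_le_mul_of_nonneg_left h hx.le
  calc x * Real.log (x/y) ≤ x * ((x-y)/y) := h3
    _ = (x - y) + (x - y)^2 / y := by field_simp; ring

lemma entropy_F_bounds {a b p q Nr : ℝ} (ha : 0 < a) (hb : 0 < b) (hp : 0 < p) (hq : 0 < q)
    (hNr : 0 < Nr) (hab : a + b = Nr) (hpq : p + q = 1) (hδ : |a - p*Nr| ≤ 1) :
    0 ≤ a * Real.log (a/(p*Nr)) + b * Real.log (b/(q*Nr)) ∧
    a * Real.log (a/(p*Nr)) + b * Real.log (b/(q*Nr)) ≤ (1/p + 1/q)/Nr := by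
  have hpN : 0 < p * Nr := by positivity
  have hqN : 0 < q * Nr := by positivity
  constructor
  · have h1 := xlog_ge ha hpN
    have h2 := xlog_ge hb hqN
    nlinarith [h1, h2]
  · have h1 := xlog_le ha hpN
    have h2 := xlog_le hb hqN
    have hd2 : (a - p*Nr)^2 ≤ 1 := by
      have := abs_le.mp hδ
      nlinarith [this.1, this.2]
    have hbq : b - q*Nr = -(a - p*Nr) := by nlinarith [hab, hpq]
    have hsq : (b - q*Nr)^2 = (a - p*Nr)^2 := by rw [hbq]; ring
    have key : a * Real.log (a/(p*Nr)) + b * Real.log (b/(q*Nr))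
        ≤ (a - p*Nr)^2/(p*Nr) + (a - p*Nr)^2/(q*Nr) := by
      have := h1
      have := h2
      rw [hsq] at h2
      nlinarith [h1, h2, hab, hpq]
    have hfin : (a - p*Nr)^2/(p*Nr) + (a - p*Nr)^2/(q*Nr) ≤ (1/p + 1/q)/Nr := by
      have hrhs : (1/p + 1/q)/Nr = 1/(p*Nr) + 1/(q*Nr) := by field_simp
      rw [hrhs]
      have t1 : (a-p*Nr)^2/(p*Nr) ≤ 1/(p*Nr) := by gcongr
      have t2 : (a-p*Nr)^2/(q*Nr) ≤ 1/(q*Nr) := by gcongr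
      linarith
    linarith [key, hfin]

end Entropy
section Efactor

lemma E_bounds_fixed (lam : ℝ) (hlam : 0 < lam) (N : ℕ)
    (hm1 : 1 ≤ mfl lam N) (hmN : mfl lam N < N) :
    Real.exp (-(((1+lam)/lam + (1+lam))/(N:ℝ)))
      ≤ (N:ℝ)^N * lam^(mfl lam N) /
        ((mfl lam N : ℝ)^(mfl lam N) * ((N - mfl lam N : ℕ):ℝ)^(N - mfl lam N) * (1+lam)^N)
    ∧ (N:ℝ)^N * lam^(mfl lam N) /
        ((mfl lam N : ℝ)^(mfl lam N) * ((N - mfl lam N : ℕ):ℝ)^(N - mfl lam N) * (1+lam)^N)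
      ≤ 1 := by
  set mN := mfl lam N with hmdef
  set bN := N - mN with hbdef
  have ha : (0:ℝ) < (mN:ℝ) := by exact_mod_cast hm1
  have hbn : 1 ≤ bN := by omega
  have hb : (0:ℝ) < (bN:ℝ) := by exact_mod_cast hbn
  have hNr : (0:ℝ) < (N:ℝ) := by
    have : 1 ≤ N := by omega
    exact_mod_cast this
  have hab : (mN:ℝ) + (bN:ℝ) = (N:ℝ) := by
    rw [hbdef]
    push_cast [Nat.cast_sub hmN.le]
    ring
  have h1l : (0:ℝ) < 1 + lam := by linarith
  have hp : (0:ℝ) < lam/(1+lam) := by positivity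
  have hq : (0:ℝ) < 1/(1+lam) := by positivity
  have hpq : lam/(1+lam) + 1/(1+lam) = 1 := by field_simp; ring
  have hδ : |(mN:ℝ) - (lam/(1+lam))*(N:ℝ)| ≤ 1 := by
    have h1 := mfl_le hlam N
    have h2 := lt_mfl hlam N
    rw [abs_le]
    constructor
    · have : lam/(1+lam)*(N:ℝ) = lam*N/(1+lam) := by ring
      rw [this]
      rw [hmdef]
      linarith
    · have : lam/(1+lam)*(N:ℝ) = lam*N/(1+lam) := by ring
      rw [this, hmdef]
      linarith
  have hF := entropy_F_bounds ha hb hp hq hNr hab hpq hδ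
  set F := (mN:ℝ) * Real.log ((mN:ℝ)/((lam/(1+lam))*(N:ℝ)))
      + (bN:ℝ) * Real.log ((bN:ℝ)/((1/(1+lam))*(N:ℝ))) with hFdef
  have hEpos : 0 < (N:ℝ)^N * lam^mN / ((mN:ℝ)^mN * (bN:ℝ)^bN * (1+lam)^N) := by positivity
  have hEeq : (N:ℝ)^N * lam^mN / ((mN:ℝ)^mN * (bN:ℝ)^bN * (1+lam)^N) = Real.exp (-F) := by
    rw [← Real.exp_log hEpos]
    congr 1
    rw [Real.log_div (by positivity) (by positivity), Real.log_mul (by positivity) (by positivity),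
      Real.log_mul (by positivity) (by positivity), Real.log_mul (by positivity) (by positivity),
      Real.log_pow, Real.log_pow, Real.log_pow, Real.log_pow, Real.log_pow]
    have hloga : Real.log ((mN:ℝ)/((lam/(1+lam))*(N:ℝ)))
        = Real.log (mN:ℝ) - Real.log lam + Real.log (1+lam) - Real.log (N:ℝ) := by
      rw [Real.log_div ha.ne' (by positivity), Real.log_mul (by positivity) hNr.ne',
        Real.log_div hlam.ne' h1l.ne']
      ring
    have hlogb : Real.log ((bN:ℝ)/((1/(1+lam))*(N:ℝ)))
        = Real.log (bN:ℝ) + Real.log (1+lam) - Real.log (N:ℝ) := by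
      rw [Real.log_div hb.ne' (by positivity), Real.log_mul (by positivity) hNr.ne',
        Real.log_div one_ne_zero h1l.ne', Real.log_one]
      ring
    rw [hFdef, hloga, hlogb]
    linear_combination (Real.log (1+lam) - Real.log (N:ℝ)) * hab
  rw [hEeq]
  constructor
  · apply Real.exp_le_exp.mpr
    have hC : (1/(lam/(1+lam)) + 1/(1/(1+lam)))/(N:ℝ) = ((1+lam)/lam + (1+lam))/(N:ℝ) := by
      field_simp
    have h2 := hF.2
    rw [hC] at h2
    linarith
  · have h0 := hF.1
    calc Real.exp (-F) ≤ Real.exp 0 := Real.exp_le_exp.mpr (by linarith)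
      _ = 1 := Real.exp_zero

lemma E_tendsto (lam : ℝ) (hlam : 0 < lam) :
    Filter.Tendsto (fun N : ℕ => (N:ℝ)^N * lam^(mfl lam N) /
      ((mfl lam N : ℝ)^(mfl lam N) * ((N - mfl lam N : ℕ):ℝ)^(N - mfl lam N) * (1+lam)^N))
      Filter.atTop (𝓝 1) := by
  apply tendsto_of_tendsto_of_tendsto_of_le_of_le'
    (g := fun N : ℕ => Real.exp (-(((1+lam)/lam + (1+lam))/(N:ℝ))))
    (h := fun _ : ℕ => 1)
  · have h0 : Filter.Tendsto (fun N : ℕ => ((1+lam)/lam + (1+lam))/(N:ℝ))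
        Filter.atTop (𝓝 0) := tendsto_const_div_atTop_nhds_zero_nat _
    have h1 := h0.neg
    have h2 := (Real.continuous_exp.tendsto 0).comp (by simpa using h1)
    simpa [Function.comp_def] using h2
  · exact tendsto_const_nhds
  · filter_upwards [(tendsto_mfl_atTop hlam).eventually_ge_atTop 1,
      Filter.eventually_ge_atTop 1] with N hm1 hN1
    exact (E_bounds_fixed lam hlam N hm1 (mfl_lt hlam hN1)).1
  · filter_upwards [(tendsto_mfl_atTop hlam).eventually_ge_atTop 1,
      Filter.eventually_ge_atTop 1] with N hm1 hN1
    exact (E_bounds_fixed lam hlam N hm1 (mfl_lt hlam hN1)).2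

end Efactor
section StirlingFactor

open Stirling

lemma stirling_denom_pos {n : ℕ} (hn : 1 ≤ n) :
    0 < Real.sqrt (2*n) * ((n:ℝ)/Real.exp 1)^n := by
  have h1 : (0:ℝ) < (n:ℝ) := by exact_mod_cast hn
  positivity

lemma stirlingSeq_pos' {n : ℕ} (hn : 1 ≤ n) : 0 < stirlingSeq n := by
  rw [stirlingSeq]
  have h2 := stirling_denom_pos hn
  have h3 : (0:ℝ) < (n.factorial : ℝ) := by exact_mod_cast n.factorial_pos
  positivity

lemma factorial_eq_stirling {n : ℕ} (hn : 1 ≤ n) :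
    (n.factorial : ℝ) = stirlingSeq n * (Real.sqrt (2*n) * ((n:ℝ)/Real.exp 1)^n) := by
  rw [stirlingSeq, div_mul_cancel₀]
  exact (stirling_denom_pos hn).ne'

/-- Decomposition of the Stirling factor. -/
lemma A_decomp (lam : ℝ) (hlam : 0 < lam) {N : ℕ} (hm1 : 1 ≤ mfl lam N)
    (hmN : mfl lam N < N) :
    (N.choose (mfl lam N) : ℝ) * lam^(mfl lam N) * Real.sqrt (2*Real.pi*lam*N) / (1+lam)^(N+1)
      = (stirlingSeq N / (stirlingSeq (mfl lam N) * stirlingSeq (N - mfl lam N)))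
        * (Real.sqrt (2*N) * Real.sqrt (2*Real.pi*lam*N)
            / (Real.sqrt (2*(mfl lam N)) * Real.sqrt (2*((N - mfl lam N : ℕ):ℝ)) * (1+lam)))
        * ((N:ℝ)^N * lam^(mfl lam N) /
            ((mfl lam N : ℝ)^(mfl lam N) * ((N - mfl lam N : ℕ):ℝ)^(N - mfl lam N) * (1+lam)^N)) := by
  set mN := mfl lam N with hmdef
  set bN := N - mN with hbdef
  have hbn : 1 ≤ bN := by omega
  have hNn : 1 ≤ N := by omega
  have hfact : (N.choose mN : ℝ) * (mN.factorial : ℝ) * (bN.factorial : ℝ) = (N.factorial : ℝ) := by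
    exact_mod_cast congrArg (Nat.cast : ℕ → ℝ)
      (Nat.choose_mul_factorial_mul_factorial hmN.le)
  have hfm : (mN.factorial : ℝ) = stirlingSeq mN * (Real.sqrt (2*mN) * ((mN:ℝ)/Real.exp 1)^mN) :=
    factorial_eq_stirling hm1
  have hfb : (bN.factorial : ℝ) = stirlingSeq bN * (Real.sqrt (2*bN) * ((bN:ℝ)/Real.exp 1)^bN) :=
    factorial_eq_stirling hbn
  have hfN : (N.factorial : ℝ) = stirlingSeq N * (Real.sqrt (2*N) * ((N:ℝ)/Real.exp 1)^N) :=
    factorial_eq_stirling hNn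
  have hC : (N.choose mN : ℝ)
      = stirlingSeq N * (Real.sqrt (2*N) * ((N:ℝ)/Real.exp 1)^N)
        / (stirlingSeq mN * (Real.sqrt (2*mN) * ((mN:ℝ)/Real.exp 1)^mN)
          * (stirlingSeq bN * (Real.sqrt (2*bN) * ((bN:ℝ)/Real.exp 1)^bN))) := by
    rw [← hfm, ← hfb, ← hfN, ← hfact]
    have h1 : (mN.factorial : ℝ) ≠ 0 := by exact_mod_cast mN.factorial_pos.ne'
    have h2 : (bN.factorial : ℝ) ≠ 0 := by exact_mod_cast bN.factorial_pos.ne'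
    field_simp
  rw [hC]
  have hstm := (stirlingSeq_pos' hm1).ne'
  have hstb := (stirlingSeq_pos' hbn).ne'
  have hstN := (stirlingSeq_pos' hNn).ne'
  have hma : (0:ℝ) < (mN:ℝ) := by exact_mod_cast hm1
  have hba : (0:ℝ) < (bN:ℝ) := by exact_mod_cast hbn
  have hNa : (0:ℝ) < (N:ℝ) := by exact_mod_cast hNn
  have hsm : (0:ℝ) < Real.sqrt (2*mN) := Real.sqrt_pos.mpr (by positivity)
  have hsb : (0:ℝ) < Real.sqrt (2*bN) := Real.sqrt_pos.mpr (by positivity)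
  have hsN : (0:ℝ) < Real.sqrt (2*N) := Real.sqrt_pos.mpr (by positivity)
  have hexp : (0:ℝ) < Real.exp 1 := Real.exp_pos 1
  have h1lam : (0:ℝ) < 1 + lam := by linarith
  have hepow : Real.exp 1 ^ N = Real.exp 1 ^ mN * Real.exp 1 ^ bN := by
    rw [← pow_add]
    congr 1
    omega
  rw [div_pow, div_pow, div_pow, hepow]
  field_simp
  ring
end StirlingFactor
section Atends

open Stirling Filter

lemma b_div_tendsto (lam : ℝ) (hlam : 0 < lam) :
    Tendsto (fun N : ℕ => ((N - mfl lam N : ℕ):ℝ)/(N:ℝ)) atTop (𝓝 (1/(1+lam))) := by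
  have h1 : Tendsto (fun N : ℕ => 1 - (mfl lam N : ℝ)/(N:ℝ)) atTop (𝓝 (1 - lam/(1+lam))) :=
    tendsto_const_nhds.sub (tendsto_mfl_div hlam)
  have h2 : 1 - lam/(1+lam) = 1/(1+lam) := by field_simp; ring
  rw [h2] at h1
  apply h1.congr'
  filter_upwards [Filter.eventually_ge_atTop 1] with N hN
  have hmN := (mfl_lt hlam hN).le
  have hNpos : (0:ℝ) < (N:ℝ) := by exact_mod_cast hN
  rw [Nat.cast_sub hmN]
  field_simp

lemma T_tendsto (lam : ℝ) (hlam : 0 < lam) :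
    Tendsto (fun N : ℕ => Real.sqrt (2*N) * Real.sqrt (2*Real.pi*lam*N)
        / (Real.sqrt (2*(mfl lam N)) * Real.sqrt (2*((N - mfl lam N : ℕ):ℝ)) * (1+lam)))
      atTop (𝓝 (Real.sqrt Real.pi)) := by
  have h1lam : (0:ℝ) < 1 + lam := by linarith
  have hx : Tendsto (fun N : ℕ => ((mfl lam N : ℝ)/(N:ℝ)) * (((N - mfl lam N : ℕ):ℝ)/(N:ℝ)))
      atTop (𝓝 ((lam/(1+lam)) * (1/(1+lam)))) :=
    (tendsto_mfl_div hlam).mul (b_div_tendsto lam hlam)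
  have hL0 : (lam/(1+lam)) * (1/(1+lam)) ≠ 0 := by positivity
  have hq : Tendsto (fun N : ℕ => Real.pi * lam / (((mfl lam N : ℝ)/(N:ℝ)) * (((N - mfl lam N : ℕ):ℝ)/(N:ℝ))))
      atTop (𝓝 (Real.pi * lam / ((lam/(1+lam)) * (1/(1+lam))))) :=
    tendsto_const_nhds.div hx hL0
  have hsqrt := hq.sqrt
  have hdiv := hsqrt.div_const (1+lam)
  have hval : Real.sqrt (Real.pi * lam / ((lam/(1+lam)) * (1/(1+lam)))) / (1+lam)
      = Real.sqrt Real.pi := by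
    have e1 : Real.pi * lam / ((lam/(1+lam)) * (1/(1+lam))) = Real.pi * (1+lam)^2 := by
      field_simp
    rw [e1, Real.sqrt_mul Real.pi_pos.le, Real.sqrt_sq h1lam.le]
    field_simp
  rw [hval] at hdiv
  apply hdiv.congr'
  filter_upwards [(tendsto_mfl_atTop hlam).eventually_ge_atTop 1,
    Filter.eventually_ge_atTop 1] with N hm1 hN1
  have hmN := mfl_lt hlam hN1
  have hbn : 1 ≤ N - mfl lam N := by omega
  have hma : (0:ℝ) < (mfl lam N : ℝ) := by exact_mod_cast hm1
  have hba : (0:ℝ) < ((N - mfl lam N : ℕ):ℝ) := by exact_mod_cast hbn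
  have hNa : (0:ℝ) < (N:ℝ) := by exact_mod_cast hN1
  have e1 : Real.sqrt (2*(N:ℝ)) * Real.sqrt (2*Real.pi*lam*N)
      = Real.sqrt ((2*(N:ℝ)) * (2*Real.pi*lam*N)) := (Real.sqrt_mul (by positivity) _).symm
  have e2 : Real.sqrt (2*(mfl lam N :ℝ)) * Real.sqrt (2*((N - mfl lam N : ℕ):ℝ))
      = Real.sqrt ((2*(mfl lam N:ℝ)) * (2*((N - mfl lam N : ℕ):ℝ))) :=
    (Real.sqrt_mul (by positivity) _).symm
  have e3 : Real.sqrt ((2*(N:ℝ)) * (2*Real.pi*lam*N))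
        / Real.sqrt ((2*(mfl lam N:ℝ)) * (2*((N - mfl lam N : ℕ):ℝ)))
      = Real.sqrt (((2*(N:ℝ)) * (2*Real.pi*lam*N))
        / ((2*(mfl lam N:ℝ)) * (2*((N - mfl lam N : ℕ):ℝ)))) :=
    (Real.sqrt_div (by positivity) _).symm
  have e4 : ((2*(N:ℝ)) * (2*Real.pi*lam*N)) / ((2*(mfl lam N:ℝ)) * (2*((N - mfl lam N : ℕ):ℝ)))
      = Real.pi * lam / (((mfl lam N : ℝ)/(N:ℝ)) * (((N - mfl lam N : ℕ):ℝ)/(N:ℝ))) := by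
    field_simp
  rw [e4] at e3
  rw [e1, e2, ← e3, div_div]

lemma A_tendsto (lam : ℝ) (hlam : 0 < lam) :
    Tendsto (fun N : ℕ => (N.choose (mfl lam N) : ℝ) * lam^(mfl lam N)
        * Real.sqrt (2*Real.pi*lam*N) / (1+lam)^(N+1)) atTop (𝓝 1) := by
  have hst := tendsto_stirlingSeq_sqrt_pi
  have hstm : Tendsto (fun N : ℕ => stirlingSeq (mfl lam N)) atTop (𝓝 (Real.sqrt Real.pi)) :=
    hst.comp (tendsto_mfl_atTop hlam)
  have hstb : Tendsto (fun N : ℕ => stirlingSeq (N - mfl lam N)) atTop (𝓝 (Real.sqrt Real.pi)) :=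
    hst.comp (tendsto_sub_mfl_atTop hlam)
  have hpine : Real.sqrt Real.pi ≠ 0 := by
    have := Real.sqrt_pos.mpr Real.pi_pos
    linarith
  have hR : Tendsto (fun N : ℕ => stirlingSeq N / (stirlingSeq (mfl lam N) * stirlingSeq (N - mfl lam N)))
      atTop (𝓝 (Real.sqrt Real.pi / (Real.sqrt Real.pi * Real.sqrt Real.pi))) :=
    hst.div (hstm.mul hstb) (by positivity)
  have hT := T_tendsto lam hlam
  have hE := E_tendsto lam hlam
  have hprod := (hR.mul hT).mul hE
  have hval : Real.sqrt Real.pi / (Real.sqrt Real.pi * Real.sqrt Real.pi) * Real.sqrt Real.pi * 1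
      = 1 := by field_simp
  rw [hval] at hprod
  apply hprod.congr'
  filter_upwards [(tendsto_mfl_atTop hlam).eventually_ge_atTop 1,
    Filter.eventually_ge_atTop 1] with N hm1 hN1
  exact (A_decomp lam hlam hm1 (mfl_lt hlam hN1)).symm

end Atends
/-- **Mass at the metastable state** (Lemma `lem:mass at metastable`): with
`m = ⌊λN/(1+λ)⌋`, one has
`v_m ≃ ((1+λ)/√(2πλN)) ((1+λ)/λ)^{N + 2/(1+2λ)}` as `N → ∞`. -/
theorem mass_at_metastable
    (lam alpha : ℝ) (hlam : 0 < lam) (halpha : 0 < alpha)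
    (μ : ℕ → (ℕ × ℕ) → ℝ)
    (hpos : ∀ N : ℕ, ∀ x ∈ starStates N, 0 < μ N x)
    (hbal : ∀ N : ℕ, IsBalanced lam alpha N (μ N))
    (hnorm : ∀ N : ℕ, μ N (1, N) = 1) :
    Tendsto (fun N : ℕ =>
        μ N (1, ⌊lam * N / (1 + lam)⌋₊) /
          (((1 + lam) / Real.sqrt (2 * Real.pi * lam * N)) *
            ((1 + lam) / lam) ^ ((N : ℝ) + 2 / (1 + 2 * lam))))
      atTop (𝓝 1) := by
  have hmfl : ∀ N : ℕ, ⌊lam * (N:ℝ) / (1 + lam)⌋₊ = mfl lam N := fun _ => rfl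
  simp only [hmfl]
  have h1lam : (0:ℝ) < 1 + lam := by linarith
  have h12 : (0:ℝ) < 1 + 2*lam := by linarith
  set K := ((1 + lam) / lam) ^ ((2:ℝ) / (1 + 2 * lam)) with hKdef
  have hKpos : 0 < K := Real.rpow_pos_of_pos (by positivity) _
  have hv : ∀ N n, n ≤ N → 0 < μ N (1, n) :=
    fun N n hn => hpos N _ (mem_starStates.mpr ⟨Or.inr rfl, hn⟩)
  have hu : ∀ N n, n ≤ N → 0 < μ N (0, n) :=
    fun N n hn => hpos N _ (mem_starStates.mpr ⟨Or.inl rfl, hn⟩)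
  have hev_m1 : ∀ᶠ N : ℕ in atTop, 1 ≤ mfl lam N :=
    (tendsto_mfl_atTop hlam).eventually_ge_atTop 1
  have hev_N1 : ∀ᶠ N : ℕ in atTop, 1 ≤ N := Filter.eventually_ge_atTop 1
  -- D_m / N tends to lam^2/(1+lam)
  have hDmdiv : Tendsto (fun N : ℕ => ((1+2*lam)*(mfl lam N : ℝ) - lam*N)/(N:ℝ))
      atTop (𝓝 (lam^2/(1+lam))) := by
    have h1 : Tendsto (fun N : ℕ => (1+2*lam)*((mfl lam N : ℝ)/(N:ℝ)) - lam)
        atTop (𝓝 ((1+2*lam)*(lam/(1+lam)) - lam)) :=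
      (Filter.Tendsto.const_mul (1+2*lam) (tendsto_mfl_div hlam)).sub tendsto_const_nhds
    have hval : (1+2*lam)*(lam/(1+lam)) - lam = lam^2/(1+lam) := by field_simp; ring
    rw [hval] at h1
    apply h1.congr'
    filter_upwards [Filter.eventually_ge_atTop 1] with N hN
    have hNpos : (0:ℝ) < (N:ℝ) := by exact_mod_cast hN
    field_simp
  have hev_Dm : ∀ᶠ N : ℕ in atTop, 0 < (1+2*lam)*(mfl lam N : ℝ) - lam*N := by
    have h0 : (0:ℝ) < lam^2/(1+lam) := by positivity
    filter_upwards [hDmdiv.eventually (lt_mem_nhds (show (0:ℝ) < lam^2/(1+lam) from h0)),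
      Filter.eventually_ge_atTop 1] with N h1 hN
    have hNpos : (0:ℝ) < (N:ℝ) := by exact_mod_cast hN
    have := mul_pos h1 hNpos
    rw [div_mul_cancel₀] at this
    · exact this
    · exact hNpos.ne'
  -- the product
  set P := fun N : ℕ => ∏ j ∈ Finset.Ico (mfl lam N) N, (1 + μ N (0, j+1) / μ N (1, j+1))
    with hPdef
  have hPpos : ∀ N : ℕ, 0 < P N := by
    intro N
    apply Finset.prod_pos
    intro j hj
    simp only [Finset.mem_Ico] at hj
    have h1 := hu N (j+1) (by omega)
    have h2 := hv N (j+1) (by omega)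
    positivity
  -- sandwich for log P
  have hSb : ∀ᶠ N : ℕ in atTop,
      (Real.log ((1+2*lam)*(N:ℝ) - lam*N + ((6+4*lam)/lam+2+2*lam))
        - Real.log ((1+2*lam)*(mfl lam N:ℝ) - lam*N + ((6+4*lam)/lam+2+2*lam))) / (1+2*lam)
        ≤ Real.log (P N) ∧
      Real.log (P N) ≤ (Real.log ((1+2*lam)*(N:ℝ) - lam*N)
        - Real.log ((1+2*lam)*(mfl lam N:ℝ) - lam*N)) / (1+2*lam) := by
    filter_upwards [hev_m1, hev_N1, hev_Dm] with N hm1 hN1 hDm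
    have hmN := mfl_lt hlam hN1
    have hfl1 := mfl_le hlam N
    have hfl2 := lt_mfl hlam N
    have hDpos : ∀ j, mfl lam N ≤ j → j ≤ N → 0 < (1+2*lam)*(j:ℝ) - lam*(N:ℝ) := by
      intro j hj hjN
      have : (mfl lam N : ℝ) ≤ (j:ℝ) := by exact_mod_cast hj
      nlinarith
    have hub : ∀ j, mfl lam N ≤ j → j < N →
        μ N (0,j+1)/μ N (1,j+1) ≤ 1 / ((1+2*lam)*((j+1:ℕ):ℝ) - lam*(N:ℝ)) := by
      intro j hj hjN
      have hD1 : 0 < (1+2*lam)*((j+1:ℕ):ℝ) - lam*(N:ℝ) := hDpos (j+1) (by omega) (by omega)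
      have hup := u_upper (μ N) hlam (hbal N) (hpos N) (j+1) (by omega) (by omega) hD1
      have hv1 := hv N (j+1) (by omega)
      have hu1 := hu N (j+1) (by omega)
      rw [div_le_div_iff₀ hv1 hD1]
      linarith
    have hlb : ∀ j, mfl lam N ≤ j → j < N →
        1 / ((1+2*lam)*((j+1:ℕ):ℝ) - lam*(N:ℝ) + (6+4*lam)/lam) ≤ μ N (0,j+1)/μ N (1,j+1) := by
      intro j hj hjN
      have hD1 : 0 < (1+2*lam)*((j+1:ℕ):ℝ) - lam*(N:ℝ) := hDpos (j+1) (by omega) (by omega)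
      have hjm : (mfl lam N : ℝ) ≤ (j:ℝ) := by exact_mod_cast hj
      have hphi : lam * ((N:ℝ) - ((j+1:ℕ):ℝ)) * lam
          ≤ 2 * ((1+2*lam)*(((j+1:ℕ):ℝ)+1) - lam*(N:ℝ)) := by
        have key1 : lam*(N:ℝ) < (1+lam)*((j:ℝ)+1) := by
          have h' : lam*(N:ℝ)/(1+lam) < (j:ℝ)+1 := by linarith [hfl2, hjm]
          calc lam*(N:ℝ) = (lam*(N:ℝ)/(1+lam))*(1+lam) := by field_simp
            _ < ((j:ℝ)+1)*(1+lam) := by nlinarith [h1lam]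
            _ = (1+lam)*((j:ℝ)+1) := by ring
        have key2 := mul_lt_mul_of_pos_left key1 hlam
        push_cast
        nlinarith [key1, key2, hlam, mul_pos hlam hlam]
      have hlo := u_lower (μ N) hlam (hbal N) (hpos N) (j+1) (by omega) (by omega) hD1 hphi
      have hv1 := hv N (j+1) (by omega)
      have hu1 := hu N (j+1) (by omega)
      have hc : (0:ℝ) < (6+4*lam)/lam := by positivity
      rw [div_le_div_iff₀ (by linarith) hv1]
      linarith
    have := log_prod_sandwich lam ((6+4*lam)/lam) hlam (by positivity) hmN.le
      (fun j => (1+2*lam)*(j:ℝ) - lam*(N:ℝ)) (fun k => μ N (0,k)/μ N (1,k))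
      (by intro j; push_cast; ring) hDpos (by intro j h1 h2; exact_mod_cast hub j h1 h2)
      (by intro j h1 h2; exact_mod_cast hlb j h1 h2)
    constructor
    · have h := this.1
      convert h using 3 <;> push_cast <;> ring
    · have h := this.2
      convert h using 3 <;> push_cast <;> ring
  -- limits of the bounds
  have hgen : ∀ a : ℝ, 0 ≤ a →
      Tendsto (fun N : ℕ => (Real.log ((1+2*lam)*(N:ℝ) - lam*N + a)
        - Real.log ((1+2*lam)*(mfl lam N:ℝ) - lam*N + a)) / (1+2*lam))
        atTop (𝓝 (Real.log (((1+lam)/lam)^(2:ℕ)) / (1+2*lam))) := by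
    intro a ha
    have hnum : Tendsto (fun N : ℕ => (1+lam) + a*(1/(N:ℝ))) atTop (𝓝 ((1+lam) + a*0)) :=
      tendsto_const_nhds.add (Filter.Tendsto.const_mul a tendsto_one_div_atTop_nhds_zero_nat)
    have hden : Tendsto (fun N : ℕ => (1+2*lam)*((mfl lam N : ℝ)/(N:ℝ)) - lam + a*(1/(N:ℝ)))
        atTop (𝓝 (((1+2*lam)*(lam/(1+lam)) - lam) + a*0)) :=
      ((Filter.Tendsto.const_mul (1+2*lam) (tendsto_mfl_div hlam)).sub tendsto_const_nhds).add
        (Filter.Tendsto.const_mul a tendsto_one_div_atTop_nhds_zero_nat)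
    have hdval : ((1+2*lam)*(lam/(1+lam)) - lam) + a*0 = lam^2/(1+lam) := by
      field_simp; ring
    rw [hdval] at hden
    have hdne : lam^2/(1+lam) ≠ 0 := by positivity
    have hratio := hnum.div hden hdne
    have hlog := (Real.continuousAt_log (show ((1+lam) + a*0) / (lam^2/(1+lam)) ≠ 0 by
      rw [mul_zero, add_zero]; positivity)).tendsto.comp hratio
    have hlval : Real.log (((1+lam) + a*0) / (lam^2/(1+lam)))
        = Real.log (((1+lam)/lam)^(2:ℕ)) := by
      congr 1
      rw [mul_zero, add_zero]
      field_simp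
    rw [hlval] at hlog
    have hfin := hlog.div_const (1+2*lam)
    apply hfin.congr'
    filter_upwards [hev_Dm, Filter.eventually_ge_atTop 1] with N hDm hN1
    have hNpos : (0:ℝ) < (N:ℝ) := by exact_mod_cast hN1
    have hXpos : 0 < (1+2*lam)*(N:ℝ) - lam*N + a := by nlinarith
    have hYpos : 0 < (1+2*lam)*(mfl lam N:ℝ) - lam*N + a := by linarith
    have e1 : ((1+lam) + a*(1/(N:ℝ))) = ((1+2*lam)*(N:ℝ) - lam*N + a)/(N:ℝ) := by
      field_simp; ring
    have e2 : ((1+2*lam)*((mfl lam N : ℝ)/(N:ℝ)) - lam + a*(1/(N:ℝ)))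
        = ((1+2*lam)*(mfl lam N:ℝ) - lam*N + a)/(N:ℝ) := by
      field_simp
    have e3 : (((1+2*lam)*(N:ℝ) - lam*N + a)/(N:ℝ))
        / ((((1+2*lam)*(mfl lam N:ℝ) - lam*N + a))/(N:ℝ))
        = ((1+2*lam)*(N:ℝ) - lam*N + a) / ((1+2*lam)*(mfl lam N:ℝ) - lam*N + a) := by
      rw [div_div_div_cancel_right₀]
      exact hNpos.ne'
    simp only [Function.comp_apply, Pi.div_apply]
    rw [e1, e2, e3, Real.log_div hXpos.ne' hYpos.ne']
  have hUB := hgen 0 le_rfl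
  have hLB := hgen ((6+4*lam)/lam+2+2*lam) (by positivity)
  simp only [add_zero] at hUB
  -- squeeze: log P tends to ℓ
  have hS : Tendsto (fun N : ℕ => Real.log (P N)) atTop
      (𝓝 (Real.log (((1+lam)/lam)^(2:ℕ)) / (1+2*lam))) := by
    apply tendsto_of_tendsto_of_tendsto_of_le_of_le' hLB hUB
    · filter_upwards [hSb] with N h
      exact h.1
    · filter_upwards [hSb] with N h
      exact h.2
  have hexpS : Tendsto P atTop (𝓝 (Real.exp (Real.log (((1+lam)/lam)^(2:ℕ)) / (1+2*lam)))) := by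
    have h := (Real.continuous_exp.tendsto _).comp hS
    apply h.congr
    intro N
    exact Real.exp_log (hPpos N)
  have hexpval : Real.exp (Real.log (((1+lam)/lam)^(2:ℕ)) / (1+2*lam)) = K := by
    rw [hKdef, Real.rpow_def_of_pos (by positivity), Real.log_pow]
    congr 1
    push_cast
    ring
  rw [hexpval] at hexpS
  -- combine with the Stirling factor
  have hA := A_tendsto lam hlam
  have hfinal := (hA.mul hexpS).mul_const K⁻¹
  rw [one_mul, mul_inv_cancel₀ hKpos.ne'] at hfinal
  apply hfinal.congr'
  filter_upwards [hev_m1, hev_N1] with N hm1 hN1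
  have hmN := mfl_lt hlam hN1
  have hvm := prod_formula (μ N) hlam (hbal N) (hpos N) (N - mfl lam N) (mfl lam N) (by omega)
  rw [hnorm N, mul_one] at hvm
  have hreindex : ∏ k ∈ Finset.Ico (mfl lam N + 1) (N + 1), (1 + μ N (0,k) / μ N (1,k))
      = P N := by
    rw [hPdef]
    exact (Finset.prod_Ico_add' (fun k => 1 + μ N (0,k) / μ N (1,k)) (mfl lam N) N 1).symm
  rw [hreindex] at hvm
  -- now the algebraic identity
  have hsq : 0 < Real.sqrt (2*Real.pi*lam*(N:ℝ)) := by
    apply Real.sqrt_pos.mpr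
    have hNpos : (0:ℝ) < (N:ℝ) := by exact_mod_cast hN1
    positivity
  have hrw : ((1 + lam) / lam) ^ ((N : ℝ) + 2 / (1 + 2 * lam))
      = ((1+lam)/lam)^(N:ℕ) * K := by
    rw [Real.rpow_add (by positivity), Real.rpow_natCast, hKdef]
  rw [hrw]
  have hμ : μ N (1, mfl lam N)
      = (N.choose (mfl lam N) : ℝ) * P N / lam ^ (N - mfl lam N) := by
    rw [eq_div_iff (pow_ne_zero _ hlam.ne')]
    exact hvm
  rw [hμ, div_pow]
  set m := mfl lam N with hm
  clear_value m
  obtain ⟨b, rfl⟩ : ∃ b, N = m + b := ⟨N - m, by omega⟩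
  have hbsub : m + b - m = b := by omega
  rw [hbsub]
  have hNpos : (0:ℝ) < ((m+b:ℕ):ℝ) := by exact_mod_cast show 0 < m + b by omega
  field_simp
  ring
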